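/- The two definitions of the Gini index agree: for a probability vector p on {0,…,d−1}, one has 1 − (2/(d+1)) Σ_{k=0}^{d−1} (d−k) p(π(k)) = (1/(2(d+1))) Σ_{r,s} |p(r) − p(s)|, where π is a permutation sorting p in ascending order. -/
import Mathlib


open Matrix BigOperators

noncomputable def omega (d : ℕ) : ℂ := Complex.exp (2 * Real.pi * Complex.I / d)

noncomputable def wpow (d : ℕ) [NeZero d] (x : ZMod d) : ℂ := omega d ^ x.val

noncomputable def Fmat (d : ℕ) [NeZero d] : Matrix (ZMod d) (ZMod d) ℂ :=
  Matrix.of fun r s => wpow d (r * s) / (Real.sqrt d : ℂ)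

noncomputable def Zmat (d : ℕ) [NeZero d] : Matrix (ZMod d) (ZMod d) ℂ :=
  Matrix.diagonal fun m => wpow d m

noncomputable def Xmat (d : ℕ) [NeZero d] : Matrix (ZMod d) (ZMod d) ℂ :=
  Matrix.of fun m n => if m = n + 1 then 1 else 0

noncomputable def Dmat (d : ℕ) [NeZero d] (a b : ZMod d) : Matrix (ZMod d) (ZMod d) ℂ :=
  wpow d (-((2 : ZMod d)⁻¹ * a * b)) • (Zmat d ^ a.val * Xmat d ^ b.val)

noncomputable def gini {n : Type*} [Fintype n] (p : n → ℝ) : ℝ :=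
  (1 / (2 * ((Fintype.card n : ℝ) + 1))) * ∑ r, ∑ s, |p r - p s|

noncomputable def outer {n : Type*} [Fintype n] (v : n → ℂ) : Matrix n n ℂ :=
  Matrix.vecMulVec v (star v)

noncomputable def probX (d : ℕ) [NeZero d] (ρ : Matrix (ZMod d) (ZMod d) ℂ) : ZMod d → ℝ :=
  fun r => (ρ r r).re

noncomputable def probP (d : ℕ) [NeZero d] (ρ : Matrix (ZMod d) (ZMod d) ℂ) : ZMod d → ℝ :=
  fun r => (((Fmat d)ᴴ * ρ * Fmat d) r r).re

noncomputable def giniX (d : ℕ) [NeZero d] (ρ : Matrix (ZMod d) (ZMod d) ℂ) : ℝ :=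
  gini (probX d ρ)

noncomputable def giniP (d : ℕ) [NeZero d] (ρ : Matrix (ZMod d) (ZMod d) ℂ) : ℝ :=
  gini (probP d ρ)

noncomputable def giniXP (d : ℕ) [NeZero d] (ρ : Matrix (ZMod d) (ZMod d) ℂ) : ℝ :=
  giniX d ρ + giniP d ρ

lemma sum_ite_le_left (d : ℕ) (k : Fin d) (c : ℝ) :
    ∑ l : Fin d, (if l ≤ k then c else 0) = (k.val + 1 : ℝ) * c := by
  rw [← Finset.sum_filter, Finset.sum_const]
  have h : Finset.filter (fun l => l ≤ k) Finset.univ = Finset.Iic k := by ext l; simp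
  rw [h, Fin.card_Iic, nsmul_eq_mul]; push_cast; ring

lemma sum_ite_le_right (d : ℕ) (k : Fin d) (c : ℝ) :
    ∑ l : Fin d, (if k ≤ l then c else 0) = ((d : ℝ) - k.val) * c := by
  rw [← Finset.sum_filter, Finset.sum_const]
  have h : Finset.filter (fun l => k ≤ l) Finset.univ = Finset.Ici k := by ext l; simp
  rw [h, Fin.card_Ici, nsmul_eq_mul]; push_cast [Nat.cast_sub k.2.le]; ring

lemma abs_double_sum (d : ℕ) (q : Fin d → ℝ) (hq : ∀ k l : Fin d, k ≤ l → q k ≤ q l) :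
    ∑ k : Fin d, ∑ l : Fin d, |q k - q l|
      = 2 * ∑ k : Fin d, ((2 * (k.val : ℝ) + 1 - d) * q k) := by
  have key : ∀ k l : Fin d, |q k - q l|
      = (if l ≤ k then q k - q l else 0) + (if k ≤ l then q l - q k else 0) := by
    intro k l
    rcases lt_trichotomy k l with h | h | h
    · rw [if_neg (not_le.mpr h), if_pos h.le, abs_sub_comm,
        abs_of_nonneg (sub_nonneg.mpr (hq k l h.le))]; ring
    · subst h; simp
    · rw [if_pos h.le, if_neg (not_le.mpr h),
        abs_of_nonneg (sub_nonneg.mpr (hq l k h.le))]; ring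
  calc ∑ k : Fin d, ∑ l : Fin d, |q k - q l|
      = ∑ k : Fin d, ∑ l : Fin d, ((if l ≤ k then q k - q l else 0)
          + (if k ≤ l then q l - q k else 0)) := by
        refine Finset.sum_congr rfl fun k _ => Finset.sum_congr rfl fun l _ => key k l
    _ = (∑ k : Fin d, ∑ l : Fin d, (if l ≤ k then q k - q l else 0))
          + ∑ k : Fin d, ∑ l : Fin d, (if k ≤ l then q l - q k else 0) := by
        rw [← Finset.sum_add_distrib]
        exact Finset.sum_congr rfl fun k _ => Finset.sum_add_distrib
    _ = 2 * ∑ k : Fin d, ∑ l : Fin d, (if l ≤ k then q k - q l else 0) := by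
        rw [two_mul]
        congr 1
        rw [Finset.sum_comm]
    _ = 2 * ∑ k : Fin d, ((2 * (k.val : ℝ) + 1 - d) * q k) := by
        congr 1
        have split : ∀ k : Fin d, ∑ l : Fin d, (if l ≤ k then q k - q l else 0)
            = (∑ l : Fin d, (if l ≤ k then q k else 0))
              - ∑ l : Fin d, (if l ≤ k then q l else 0) := by
          intro k
          rw [← Finset.sum_sub_distrib]
          refine Finset.sum_congr rfl fun l _ => ?_
          by_cases h : l ≤ k <;> simp [h]
        calc ∑ k : Fin d, ∑ l : Fin d, (if l ≤ k then q k - q l else 0)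
            = (∑ k : Fin d, ∑ l : Fin d, (if l ≤ k then q k else 0))
              - ∑ k : Fin d, ∑ l : Fin d, (if l ≤ k then q l else 0) := by
              rw [← Finset.sum_sub_distrib]
              exact Finset.sum_congr rfl fun k _ => split k
          _ = (∑ k : Fin d, ((k.val : ℝ) + 1) * q k)
              - ∑ l : Fin d, ((d : ℝ) - l.val) * q l := by
              congr 1
              · exact Finset.sum_congr rfl fun k _ => sum_ite_le_left d k (q k)
              · rw [Finset.sum_comm]
                exact Finset.sum_congr rfl fun l _ => sum_ite_le_right d l (q l)
          _ = ∑ k : Fin d, ((2 * (k.val : ℝ) + 1 - d) * q k) := by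
              rw [← Finset.sum_sub_distrib]
              exact Finset.sum_congr rfl fun k _ => by ring

theorem gini_defs_agree (d : ℕ) (hd : 1 ≤ d) (p : Fin d → ℝ) (hp : ∀ r, 0 ≤ p r)
    (hsum : ∑ r, p r = 1) (π : Equiv.Perm (Fin d))
    (hmono : ∀ k l : Fin d, k ≤ l → p (π k) ≤ p (π l)) :
    1 - (2 / ((d : ℝ) + 1)) * ∑ k : Fin d, ((d : ℝ) - (k.val : ℝ)) * p (π k) = gini p := by
  set q : Fin d → ℝ := fun k => p (π k) with hq
  have hS : ∑ r : Fin d, ∑ s : Fin d, |p r - p s| = ∑ k : Fin d, ∑ l : Fin d, |q k - q l| := by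
    rw [← Equiv.sum_comp π (fun r => ∑ s, |p r - p s|)]
    exact Finset.sum_congr rfl fun k _ =>
      (Equiv.sum_comp π (fun s => |p (π k) - p s|)).symm
  have hqsum : ∑ k : Fin d, q k = 1 := by
    rw [hq]; rw [Equiv.sum_comp π p]; exact hsum
  have habs := abs_double_sum d q hmono
  have hcard : (Fintype.card (Fin d) : ℝ) = d := by simp
  have hd1 : (d : ℝ) + 1 ≠ 0 := by positivity
  have hB : ∑ k : Fin d, (2 * (k.val : ℝ) + 1 - d) * q k
      = ((d : ℝ) + 1) * (∑ k : Fin d, q k) - 2 * ∑ k : Fin d, ((d : ℝ) - k.val) * q k := by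
    rw [Finset.mul_sum, Finset.mul_sum, ← Finset.sum_sub_distrib]
    exact Finset.sum_congr rfl fun k _ => by ring
  rw [hqsum, mul_one] at hB
  rw [gini, hcard, hS, habs, hB]
  field_simp
  ring
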